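/- Let K1 < K2 < K3 be real numbers, let f : [K1, K3] → ℝ be strictly convex and strictly increasing, and let 0 < P1 < P3 be real numbers. Define the f-modified linear interpolant P2 = (P1·(f(K3) − f(K2)) + P3·(f(K2) − f(K1)))/(f(K3) − f(K1)). Then the three discrete no-arbitrage conditions hold: P3 > 0, P2 < P3, and the butterfly spread (K3 − K2)·P1 − (K3 − K1)·P2 + (K2 − K1)·P3 > 0. -/

import Mathlib

/-- The `f`-modified linear interpolation with `f` strictly convex and strictly increasing
on `[K1, K3]` satisfies the three discrete no-arbitrage conditions. -/
theorem stmt_4 (K1 K2 K3 : ℝ) (h12 : K1 < K2) (h23 : K2 < K3)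
    (f : ℝ → ℝ) (hconv : StrictConvexOn ℝ (Set.Icc K1 K3) f)
    (hmono : StrictMonoOn f (Set.Icc K1 K3))
    (P1 P3 : ℝ) (hP1 : 0 < P1) (hP13 : P1 < P3)
    (P2 : ℝ)
    (hP2 : P2 = (P1 * (f K3 - f K2) + P3 * (f K2 - f K1)) / (f K3 - f K1)) :
    0 < P3 ∧ P2 < P3 ∧
    0 < (K3 - K2) * P1 - (K3 - K1) * P2 + (K2 - K1) * P3 := by
  have h13 : K1 < K3 := h12.trans h23
  have h31 : (0:ℝ) < K3 - K1 := by linarith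
  have hm1 : K1 ∈ Set.Icc K1 K3 := ⟨le_refl _, h13.le⟩
  have hm2 : K2 ∈ Set.Icc K1 K3 := ⟨h12.le, h23.le⟩
  have hm3 : K3 ∈ Set.Icc K1 K3 := ⟨h13.le, le_refl _⟩
  have hab : f K1 < f K2 := hmono hm1 hm2 h12
  have hbc : f K2 < f K3 := hmono hm2 hm3 h23
  have hac : f K1 < f K3 := hab.trans hbc
  have hden : (0:ℝ) < f K3 - f K1 := by linarith
  -- strict convexity at K2
  have ha : (0:ℝ) < (K3 - K2) / (K3 - K1) := div_pos (by linarith) h31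
  have hb : (0:ℝ) < (K2 - K1) / (K3 - K1) := div_pos (by linarith) h31
  have hsum : (K3 - K2) / (K3 - K1) + (K2 - K1) / (K3 - K1) = 1 := by
    rw [← add_div, div_eq_one_iff_eq (ne_of_gt h31)]
    ring
  have hconv2 := hconv.2 hm1 hm3 (ne_of_lt h13) ha hb hsum
  simp only [smul_eq_mul] at hconv2
  have harg : (K3 - K2) / (K3 - K1) * K1 + (K2 - K1) / (K3 - K1) * K3 = K2 := by
    field_simp
    ring
  rw [harg] at hconv2
  -- key convexity inequality cleared of denominators
  have hkey : (K3 - K1) * (f K2 - f K1) < (K2 - K1) * (f K3 - f K1) := by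
    rw [div_mul_eq_mul_div, div_mul_eq_mul_div, ← add_div, lt_div_iff₀ h31] at hconv2
    nlinarith
  refine ⟨hP1.trans hP13, ?_, ?_⟩
  · rw [hP2, div_lt_iff₀ hden]
    nlinarith
  · rw [hP2]
    have h2 : 0 < ((K3 - K2) * P1 - (K3 - K1) * ((P1 * (f K3 - f K2) + P3 * (f K2 - f K1)) / (f K3 - f K1)) + (K2 - K1) * P3) * (f K3 - f K1) := by
      rw [sub_mul, add_mul, sub_mul, mul_assoc, div_mul_cancel₀ _ (ne_of_gt hden)]
      nlinarith
    rcases mul_pos_iff.mp h2 with h | h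
    · exact h.1
    · linarith [h.2]
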